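/- Let G be a finite group having two distinct normal subgroups N₁ and N₂ such that N₁ ≅ N₂ ≅ C₂, the product N₁N₂ is isomorphic to the Klein four-group V₄, and G/N₁ ≅ G/N₂ ≅ Q_{2^k} for some k ≥ 3, where Q_{2^k} denotes the generalized quaternion group of order 2^k. Then G ≅ C₂ × Q_{2^k}. -/

import Mathlib

open QuaternionGroup in
lemma q_a_one_zpow {n : ℕ} (i : ℤ) :
    (a 1 : QuaternionGroup n) ^ i = a (i : ZMod (2 * n)) := by
  cases i with
  | ofNat j => simp [zpow_natCast, a_one_pow]
  | negSucc j =>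
      rw [zpow_negSucc, a_one_pow]
      apply inv_eq_of_mul_eq_one_left
      rw [a_mul_a]
      push_cast
      rw [neg_add_cancel]
      rfl

open QuaternionGroup in
lemma q_invol {n : ℕ} (hn : n ≠ 0) (x : QuaternionGroup n) (hx2 : x * x = 1)
    (hx : x ≠ 1) : x = a (n : ZMod (2 * n)) := by
  haveI : NeZero n := ⟨hn⟩
  cases x with
  | a i =>
      rw [a_mul_a, one_def] at hx2
      have hii : i + i = 0 := by injection hx2
      have hv : (2 * n) ∣ i.val + i.val := by
        have : ((i.val + i.val : ℕ) : ZMod (2 * n)) = 0 := by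
          push_cast [ZMod.natCast_zmod_val]; exact hii
        exact (ZMod.natCast_eq_zero_iff _ _).mp this
      have hlt : i.val < 2 * n := ZMod.val_lt i
      obtain ⟨c, hc⟩ := hv
      have : i.val = 0 ∨ i.val = n := by
        rcases Nat.lt_or_ge c 2 with h | h
        · interval_cases c <;> omega
        · nlinarith [Nat.one_le_iff_ne_zero.mpr hn]
      rcases this with h | h
      · exfalso; apply hx
        rw [one_def, ← ZMod.natCast_zmod_val i, h, Nat.cast_zero]
      · rw [← ZMod.natCast_zmod_val i, h]
  | xa i =>
      exfalso
      rw [xa_mul_xa, add_sub_cancel_right, one_def] at hx2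
      have h : ((n : ℕ) : ZMod (2 * n)) = 0 := by injection hx2
      have h2 := (ZMod.natCast_eq_zero_iff _ _).mp h
      obtain ⟨c, hc⟩ := h2
      cases c with
      | zero => simp at hc; omega
      | succ c => nlinarith [Nat.one_le_iff_ne_zero.mpr hn]

open QuaternionGroup in
lemma q_invol_unique {n : ℕ} (hn : n ≠ 0) (x y : QuaternionGroup n)
    (hx2 : x * x = 1) (hx : x ≠ 1) (hy2 : y * y = 1) (hy : y ≠ 1) : x = y :=
  (q_invol hn x hx2 hx).trans (q_invol hn y hy2 hy).symm

open QuaternionGroup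

/-- If a finite group G has two distinct normal subgroups N₁, N₂ with
N₁ ≅ N₂ ≅ C₂, N₁N₂ ≅ V₄, and G/N₁ ≅ G/N₂ ≅ Q_{2^k} (k ≥ 3), then G ≅ C₂ × Q_{2^k}. -/
theorem stmt_2 {G : Type} [Group G] [Finite G]
    (N₁ N₂ : Subgroup G) [N₁.Normal] [N₂.Normal] (hne : N₁ ≠ N₂)
    (h₁ : Nonempty (N₁ ≃* Multiplicative (ZMod 2)))
    (h₂ : Nonempty (N₂ ≃* Multiplicative (ZMod 2)))
    (hV : Nonempty ((N₁ ⊔ N₂ : Subgroup G) ≃*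
      (Multiplicative (ZMod 2) × Multiplicative (ZMod 2))))
    (k : ℕ) (hk : 3 ≤ k)
    (hQ₁ : Nonempty ((G ⧸ N₁) ≃* QuaternionGroup (2 ^ (k - 2))))
    (hQ₂ : Nonempty ((G ⧸ N₂) ≃* QuaternionGroup (2 ^ (k - 2)))) :
    Nonempty (G ≃* (Multiplicative (ZMod 2) × QuaternionGroup (2 ^ (k - 2)))) := by
  obtain ⟨e₁⟩ := h₁
  obtain ⟨e₂⟩ := h₂
  obtain ⟨Φ₁⟩ := hQ₁
  obtain ⟨Φ⟩ := hQ₂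
  set m : ℕ := 2 ^ (k - 2) with hmdef
  have hm0 : m ≠ 0 := pow_ne_zero _ two_ne_zero
  obtain ⟨j, hj, hj0⟩ : ∃ j, m = 2 * j ∧ j ≠ 0 :=
    ⟨2 ^ (k - 3), by rw [hmdef, show k - 2 = (k-3) + 1 by omega, pow_succ, mul_comm],
      pow_ne_zero _ two_ne_zero⟩
  -- the nontrivial elements of N₁, N₂
  set n₁ : G := ((e₁.symm (Multiplicative.ofAdd 1) : N₁) : G) with hn₁def
  set n₂ : G := ((e₂.symm (Multiplicative.ofAdd 1) : N₂) : G) with hn₂def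
  have hzmod : ∀ z : Multiplicative (ZMod 2), z = 1 ∨ z = Multiplicative.ofAdd 1 := by decide
  have mem₁ : ∀ x ∈ N₁, x = 1 ∨ x = n₁ := by
    intro x hx
    rcases hzmod (e₁ ⟨x, hx⟩) with h | h
    · left
      have : (⟨x, hx⟩ : N₁) = 1 := by
        have := congrArg e₁.symm h
        simpa using this
      exact congrArg Subtype.val this
    · right
      have : (⟨x, hx⟩ : N₁) = e₁.symm (Multiplicative.ofAdd 1) := by
        have := congrArg e₁.symm h
        simpa using this
      exact congrArg Subtype.val this
  have mem₂ : ∀ x ∈ N₂, x = 1 ∨ x = n₂ := by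
    intro x hx
    rcases hzmod (e₂ ⟨x, hx⟩) with h | h
    · left
      have : (⟨x, hx⟩ : N₂) = 1 := by
        have := congrArg e₂.symm h
        simpa using this
      exact congrArg Subtype.val this
    · right
      have : (⟨x, hx⟩ : N₂) = e₂.symm (Multiplicative.ofAdd 1) := by
        have := congrArg e₂.symm h
        simpa using this
      exact congrArg Subtype.val this
  have hn₁mem : n₁ ∈ N₁ := (e₁.symm (Multiplicative.ofAdd 1)).2
  have hn₂mem : n₂ ∈ N₂ := (e₂.symm (Multiplicative.ofAdd 1)).2
  have hn₁ne : n₁ ≠ 1 := by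
    intro h
    have h2 : (e₁.symm (Multiplicative.ofAdd 1) : N₁) = 1 := by
      exact_mod_cast Subtype.ext h
    have h3 := congrArg e₁ h2
    simp at h3
  have hn₂ne : n₂ ≠ 1 := by
    intro h
    have h2 : (e₂.symm (Multiplicative.ofAdd 1) : N₂) = 1 := by
      exact_mod_cast Subtype.ext h
    have h3 := congrArg e₂ h2
    simp at h3
  have hn₁sq : n₁ * n₁ = 1 := by
    have : (e₁.symm (Multiplicative.ofAdd 1) : N₁) * e₁.symm (Multiplicative.ofAdd 1) = 1 := by
      rw [← map_mul]
      rw [show (Multiplicative.ofAdd 1 : Multiplicative (ZMod 2)) * Multiplicative.ofAdd 1 = 1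
        from by decide]
      simp
    simpa using congrArg Subtype.val this
  have hn₂sq : n₂ * n₂ = 1 := by
    have : (e₂.symm (Multiplicative.ofAdd 1) : N₂) * e₂.symm (Multiplicative.ofAdd 1) = 1 := by
      rw [← map_mul]
      rw [show (Multiplicative.ofAdd 1 : Multiplicative (ZMod 2)) * Multiplicative.ofAdd 1 = 1
        from by decide]
      simp
    simpa using congrArg Subtype.val this
  -- centrality
  have hc₁ : ∀ g : G, g * n₁ = n₁ * g := by
    intro g
    have hmem : g * n₁ * g⁻¹ ∈ N₁ := Subgroup.Normal.conj_mem ‹N₁.Normal› n₁ hn₁mem g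
    rcases mem₁ _ hmem with h | h
    · exfalso
      apply hn₁ne
      have := congrArg (fun x => g⁻¹ * x * g) h
      simpa [mul_assoc] using this
    · have := congrArg (fun x => x * g) h
      simpa [mul_assoc] using this
  have hc₂ : ∀ g : G, g * n₂ = n₂ * g := by
    intro g
    have hmem : g * n₂ * g⁻¹ ∈ N₂ := Subgroup.Normal.conj_mem ‹N₂.Normal› n₂ hn₂mem g
    rcases mem₂ _ hmem with h | h
    · exfalso
      apply hn₂ne
      have := congrArg (fun x => g⁻¹ * x * g) h
      simpa [mul_assoc] using this
    · have := congrArg (fun x => x * g) h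
      simpa [mul_assoc] using this
  -- distinctness
  have hNe : n₁ ≠ n₂ := by
    intro h
    apply hne
    ext x
    constructor
    · intro hx
      rcases mem₁ x hx with h' | h'
      · rw [h']; exact N₂.one_mem
      · rw [h', h]; exact hn₂mem
    · intro hx
      rcases mem₂ x hx with h' | h'
      · rw [h']; exact N₁.one_mem
      · rw [h', ← h]; exact hn₁mem
  have hn₁N₂ : n₁ ∉ N₂ := by
    intro h
    rcases mem₂ _ h with h' | h'
    · exact hn₁ne h'
    · exact hNe h'
  have hn₂N₁ : n₂ ∉ N₁ := by
    intro h
    rcases mem₁ _ h with h' | h'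
    · exact hn₂ne h'
    · exact hNe h'.symm
  -- quotient maps
  let π : G →* G ⧸ N₂ := QuotientGroup.mk' N₂
  let π₁ : G →* G ⧸ N₁ := QuotientGroup.mk' N₁
  have hπ1 : ∀ x : G, π x = 1 ↔ x ∈ N₂ := fun x => QuotientGroup.eq_one_iff x
  have hπ₁1 : ∀ x : G, π₁ x = 1 ↔ x ∈ N₁ := fun x => QuotientGroup.eq_one_iff x
  have hdiff : ∀ x y : G, π x = π y → ∃ w ∈ N₂, y * w = x := by
    intro x y h
    exact (QuotientGroup.mk'_eq_mk' (N := _)).mp h.symm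
  have hdiff₁ : ∀ x y : G, π₁ x = π₁ y → ∃ w ∈ N₁, y * w = x := by
    intro x y h
    exact (QuotientGroup.mk'_eq_mk' (N := _)).mp h.symm
  obtain ⟨α, hα⟩ := QuotientGroup.mk'_surjective N₂ (Φ.symm (a 1))
  obtain ⟨β, hβ⟩ := QuotientGroup.mk'_surjective N₂ (Φ.symm (xa 0))
  have hΦα : Φ (π α) = a 1 := by rw [show π α = Φ.symm (a 1) from hα]; simp
  have hΦβ : Φ (π β) = xa 0 := by rw [show π β = Φ.symm (xa 0) from hβ]; simp
  have hker : ∀ x : G, Φ (π x) = 1 ↔ x ∈ N₂ := by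
    intro x
    rw [← hπ1 x]
    constructor
    · intro h
      apply Φ.injective
      rw [h, map_one]
    · intro h
      rw [h, map_one]
  have hπn₁ : Φ (π n₁) = a (m : ZMod (2*m)) := by
    apply q_invol hm0
    · rw [← map_mul, ← map_mul, hn₁sq, map_one, map_one]
    · intro h
      exact hn₁N₂ ((hker n₁).mp h)
  have hΦn₂ : Φ (π n₂) = 1 := (hker n₂).mpr hn₂mem
  have hΦn₂n₁ : Φ (π (n₂ * n₁)) = a (m : ZMod (2*m)) := by
    rw [map_mul, map_mul, hΦn₂, one_mul, hπn₁]
  have hπαm : Φ (π (α ^ m)) = a (m : ZMod (2*m)) := by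
    rw [map_pow, map_pow, hΦα, a_one_pow]
  have hαm : α ^ m = n₁ ∨ α ^ m = n₁ * n₂ := by
    have h : π (α^m) = π n₁ := Φ.injective (hπαm.trans hπn₁.symm)
    obtain ⟨w, hw, hww⟩ := hdiff _ _ h
    rcases mem₂ w hw with h' | h'
    · left; rw [← hww, h', mul_one]
    · right; rw [← hww, h']
  have hswap : ∀ x y : G, (∀ g : G, g*y = y*g) → x*x = 1 → y*y = 1 → (x*y)*(x*y) = 1 := by
    intro x y hy hx hyy
    rw [show (x*y)*(x*y) = x*(y*x)*y by group, ← hy x,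
      show x*(x*y)*y = (x*x)*(y*y) by group, hx, hyy, one_mul]
  have hsq12 : (n₁ * n₂) * (n₁ * n₂) = 1 := hswap n₁ n₂ hc₂ hn₁sq hn₂sq
  have hα2m : α ^ (2*m) = 1 := by
    have h2 : α^(2*m) = (α^m)*(α^m) := by rw [← pow_add]; ring_nf
    rcases hαm with h | h <;> rw [h2, h]
    · exact hn₁sq
    · exact hsq12
  have hordπα : orderOf (π α) = 2*m := by
    have h1 := orderOf_injective Φ.toMonoidHom Φ.injective (π α)
    have h2 : Φ.toMonoidHom (π α) = a 1 := hΦα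
    rw [h2, orderOf_a_one] at h1
    exact h1.symm
  have hordα : orderOf α = 2*m := by
    have h1 : orderOf (π α) ∣ orderOf α := orderOf_map_dvd π α
    have h2 : orderOf α ∣ 2*m := orderOf_dvd_of_pow_eq_one hα2m
    exact Nat.dvd_antisymm h2 (hordπα ▸ h1)
  have hpow_ne : ∀ t : ℕ, 0 < t → t < 2*m → α^t ≠ 1 := by
    intro t ht ht2 h
    have := orderOf_dvd_of_pow_eq_one h
    rw [hordα] at this
    exact absurd (Nat.le_of_dvd ht this) (by omega)
  -- uniqueness of the involution in G ⧸ N₁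
  have uniq₁ : ∀ u v : G ⧸ N₁, u*u = 1 → u ≠ 1 → v*v = 1 → v ≠ 1 → u = v := by
    intro u v h1 h2 h3 h4
    apply Φ₁.injective
    refine q_invol_unique hm0 _ _ ?_ ?_ ?_ ?_
    · rw [← map_mul, h1, map_one]
    · intro h; exact h2 (Φ₁.injective (by rw [h, map_one]))
    · rw [← map_mul, h3, map_one]
    · intro h; exact h4 (Φ₁.injective (by rw [h, map_one]))
  have hv2 : π₁ n₂ * π₁ n₂ = 1 := by rw [← map_mul, hn₂sq, map_one]
  have hvne : π₁ n₂ ≠ 1 := fun h => hn₂N₁ ((hπ₁1 _).mp h)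
  -- Step C : rule out α^m = n₁
  have hαmn₁ : α ^ m = n₁ * n₂ := by
    rcases hαm with hbad | h
    · exfalso
      have hmm : α ^ m = α ^ j * α ^ j := by rw [← pow_add]; congr 1; omega
      have hu2 : π₁ (α^j) * π₁ (α^j) = 1 := by
        rw [← map_mul, ← pow_add, show j + j = m by omega, hbad, (hπ₁1 n₁).mpr hn₁mem]
      have hune : π₁ (α^j) ≠ 1 := by
        intro h
        rcases mem₁ _ ((hπ₁1 _).mp h) with h' | h'
        · exact hpow_ne j (by omega) (by omega) h'
        · have h3 : α ^ j = α ^ j * α ^ j := (h'.trans hbad.symm).trans hmm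
          have h4 : α ^ j * (1:G) = α ^ j * α ^ j := by rw [mul_one]; exact h3
          exact hpow_ne j (by omega) (by omega) (mul_left_cancel h4).symm
      have heq := uniq₁ _ _ hu2 hune hv2 hvne
      obtain ⟨w, hw, hww⟩ := hdiff₁ _ _ heq
      have hsq : α^m = 1 := by
        rcases mem₁ w hw with h' | h'
        · rw [h', mul_one] at hww
          rw [hmm, ← hww, hn₂sq]
        · rw [h'] at hww
          rw [hmm, ← hww]
          exact hswap n₂ n₁ hc₁ hn₂sq hn₁sq
      exact hpow_ne m (by omega) (by omega) hsq
    · exact h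
  -- β² = α^m
  have hβsq : β * β = α ^ m := by
    have hq : (xa 0 : QuaternionGroup m) * xa 0 = a (m : ZMod (2*m)) := by
      rw [xa_mul_xa, sub_zero, add_zero]
    have h : π (β*β) = π (α^m) := by
      apply Φ.injective
      rw [map_mul, map_mul, hΦβ, hq, hπαm]
    obtain ⟨w, hw, hww⟩ := hdiff _ _ h
    rcases mem₂ w hw with h' | h'
    · rw [← hww, h', mul_one]
    · exfalso
      have hb2 : β*β = n₁ := by
        rw [← hww, h', hαmn₁, mul_assoc, hn₂sq, mul_one]
      have hu2 : π₁ β * π₁ β = 1 := by rw [← map_mul, hb2, (hπ₁1 _).mpr hn₁mem]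
      have hune : π₁ β ≠ 1 := by
        intro h
        rcases mem₁ _ ((hπ₁1 _).mp h) with h' | h'
        · rw [h'] at hΦβ
          rw [map_one, map_one, one_def] at hΦβ
          cases hΦβ
        · rw [h', hπn₁] at hΦβ
          simp at hΦβ
      have heq := uniq₁ _ _ hu2 hune hv2 hvne
      obtain ⟨w', hw', hww'⟩ := hdiff₁ _ _ heq
      rcases mem₁ _ hw' with h'' | h''
      · rw [h'', mul_one] at hww'
        rw [← hww', hΦn₂] at hΦβ
        rw [one_def] at hΦβ
        cases hΦβ
      · rw [h''] at hww'
        rw [← hww', hΦn₂n₁] at hΦβ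
        simp at hΦβ
  -- conjugation relation
  have h2mz : (m : ZMod (2*m)) + m = 0 := by
    rw [← Nat.cast_add, show m + m = 2*m by ring]
    exact ZMod.natCast_self _
  have hxa0inv : (xa 0 : QuaternionGroup m)⁻¹ = xa (m : ZMod (2*m)) := by
    symm
    apply eq_inv_of_mul_eq_one_left
    rw [xa_mul_xa, one_def]
    congr 1
    rw [add_zero, sub_eq_iff_eq_add, zero_add]
  have hprod : (xa 0 : QuaternionGroup m) * a 1 * (xa 0)⁻¹ * a 1 = 1 := by
    rw [hxa0inv, xa_mul_a, xa_mul_xa, a_mul_a, one_def]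
    congr 1
    linear_combination h2mz
  have hwmem : β * α * β⁻¹ * α ∈ N₂ := by
    rw [← hπ1]
    apply Φ.injective
    rw [map_one]
    simp only [map_mul, map_inv]
    rw [hΦα, hΦβ]
    exact hprod
  have hconj : β * α * β⁻¹ = α⁻¹ := by
    rcases mem₂ _ hwmem with h | h
    · exact eq_inv_of_mul_eq_one_left h
    · exfalso
      have hba : β * α * β⁻¹ = n₂ * α⁻¹ := by
        rw [← h]; group
      have habsq : (α*β)*(α*β) = n₁ := by
        have e1 : (α*β)*(α*β) = α * (β*α*β⁻¹) * (β*β) := by group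
        rw [e1, hba, hβsq, hαmn₁,
          show α * (n₂ * α⁻¹) * (n₁ * n₂) = (α * n₂) * (α⁻¹ * (n₁ * n₂)) by group, hc₂ α,
          show n₂ * α * (α⁻¹ * (n₁ * n₂)) = n₂ * n₁ * n₂ by group, ← hc₂ n₁,
          show n₁ * n₂ * n₂ = n₁ * (n₂ * n₂) by group, hn₂sq, mul_one]
      have hΦαβ : Φ (π (α*β)) = xa (-1 : ZMod (2*m)) := by
        rw [map_mul, map_mul, hΦα, hΦβ, a_mul_xa, zero_sub]
      have hu2 : π₁ (α*β) * π₁ (α*β) = 1 := by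
        rw [← map_mul, habsq, (hπ₁1 _).mpr hn₁mem]
      have hune : π₁ (α*β) ≠ 1 := by
        intro hh
        rcases mem₁ _ ((hπ₁1 _).mp hh) with h' | h'
        · rw [h', map_one, map_one, one_def] at hΦαβ
          cases hΦαβ
        · rw [h', hπn₁] at hΦαβ
          simp at hΦαβ
      have heq := uniq₁ _ _ hu2 hune hv2 hvne
      obtain ⟨w', hw', hww'⟩ := hdiff₁ _ _ heq
      rcases mem₁ _ hw' with h'' | h''
      · rw [h'', mul_one] at hww'
        rw [← hww', hΦn₂, one_def] at hΦαβ
        cases hΦαβ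
      · rw [h''] at hww'
        rw [← hww', hΦn₂n₁] at hΦαβ
        simp at hΦαβ
  have hβα : ∀ i : ℤ, β * α^i * β⁻¹ = α^(-i) := by
    intro i
    rw [← conj_zpow, hconj, inv_zpow, ← zpow_neg]
  haveI : NeZero m := ⟨hm0⟩
  haveI : NeZero (2*m) := ⟨by omega⟩
  have hmulbb : ∀ i t : ℤ, (α^i * β) * (α^t * β) = α^(i - t + m) := by
    intro i t
    have e : (α^i * β) * (α^t * β) = α^i * (β * α^t * β⁻¹) * (β * β) := by group
    rw [e, hβα, hβsq, ← zpow_natCast α m, ← zpow_add, ← zpow_add, sub_eq_add_neg]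
  have hmulab : ∀ i t : ℤ, (α^i * β) * α^t = α^(i - t) * β := by
    intro i t
    have e : (α^i * β) * α^t = α^i * (β * α^t * β⁻¹) * β := by group
    rw [e, hβα, ← zpow_add, sub_eq_add_neg]
  let K : Subgroup G :=
    { carrier := {g | ∃ i : ℤ, g = α^i ∨ g = α^i * β}
      one_mem' := ⟨0, Or.inl (zpow_zero α).symm⟩
      mul_mem' := by
        rintro x y ⟨i, hi | hi⟩ ⟨t, ht | ht⟩ <;> subst hi <;> subst ht
        · exact ⟨i + t, Or.inl (zpow_add α i t).symm⟩
        · exact ⟨i + t, Or.inr (by rw [← mul_assoc, ← zpow_add])⟩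
        · exact ⟨i - t, Or.inr (hmulab i t)⟩
        · exact ⟨i - t + m, Or.inl (hmulbb i t)⟩
      inv_mem' := by
        rintro x ⟨i, hi | hi⟩ <;> subst hi
        · exact ⟨-i, Or.inl (by rw [zpow_neg])⟩
        · refine ⟨i + m, Or.inr ?_⟩
          have h1 : (α^(i+m) * β) * (α^i * β) = 1 := by
            rw [hmulbb, show i + m - i + m = ((2*m : ℕ) : ℤ) by push_cast; ring,
              zpow_natCast, hα2m]
          exact (eq_inv_of_mul_eq_one_left h1).symm }
  have hn₂K : n₂ ∉ K := by
    rintro ⟨i, h | h⟩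
    · have h1 : (a 1 : QuaternionGroup m)^i = 1 := by
        rw [← hΦα, ← map_zpow, ← map_zpow, ← h, hΦn₂]
      have h2 := orderOf_dvd_iff_zpow_eq_one.mpr h1
      rw [orderOf_a_one] at h2
      have h3 : α^i = 1 := orderOf_dvd_iff_zpow_eq_one.mp (by rw [hordα]; exact_mod_cast h2)
      exact hn₂ne (h.trans h3)
    · have h1 : Φ (π n₂) = xa (-((i : ℤ) : ZMod (2*m))) := by
        rw [h, map_mul, map_mul, map_zpow, map_zpow, hΦα, hΦβ, q_a_one_zpow, a_mul_xa, zero_sub]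
      rw [hΦn₂, one_def] at h1
      cases h1
  let χ : K →* QuaternionGroup m := Φ.toMonoidHom.comp (π.comp K.subtype)
  have hχ : ∀ x : K, χ x = Φ (π (x : G)) := fun x => rfl
  have hχinj : Function.Injective χ := by
    rw [injective_iff_map_eq_one]
    intro x hx
    rw [hχ] at hx
    have hmem : (x : G) ∈ N₂ := (hker _).mp hx
    rcases mem₂ _ hmem with h | h
    · exact Subtype.ext h
    · exact absurd (h ▸ x.2) hn₂K
  have hχsurj : Function.Surjective χ := by
    rintro (i | i)
    · refine ⟨⟨α^((i.val : ℤ)), ⟨(i.val : ℤ), Or.inl rfl⟩⟩, ?_⟩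
      rw [hχ, map_zpow, map_zpow, hΦα, q_a_one_zpow]
      congr 1
      push_cast [ZMod.natCast_zmod_val]
      rfl
    · refine ⟨⟨α^(((-i).val : ℤ)) * β, ⟨((-i).val : ℤ), Or.inr rfl⟩⟩, ?_⟩
      rw [hχ, map_mul, map_mul, map_zpow, map_zpow, hΦα, hΦβ, q_a_one_zpow, a_mul_xa]
      congr 1
      push_cast [ZMod.natCast_zmod_val]
      ring
  have hcomm : ∀ (x : N₂) (y : K), Commute (N₂.subtype x) (K.subtype y) := by
    intro x y
    rcases mem₂ _ x.2 with h | h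
    · show (x : G) * y = (y : G) * x
      rw [h, one_mul, mul_one]
    · show (x : G) * y = (y : G) * x
      rw [h]
      exact (hc₂ _).symm
  let ψ : N₂ × K →* G := (N₂.subtype).noncommCoprod K.subtype hcomm
  have hψ : ∀ p : N₂ × K, ψ p = (p.1 : G) * (p.2 : G) := fun p => rfl
  have hψinj : Function.Injective ψ := by
    rw [injective_iff_map_eq_one]
    intro p hp
    rw [hψ] at hp
    have h2 : (p.2 : G) ∈ N₂ := by
      rw [eq_inv_of_mul_eq_one_right hp]
      exact N₂.inv_mem p.1.2
    rcases mem₂ _ h2 with h | h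
    · have h1 : (p.1 : G) = 1 := by rw [h, mul_one] at hp; exact hp
      exact Prod.ext (Subtype.ext h1) (Subtype.ext h)
    · exact absurd (h ▸ p.2.2) hn₂K
  have hψsurj : Function.Surjective ψ := by
    intro g
    obtain ⟨x, hx⟩ := hχsurj (Φ (π g))
    rw [hχ] at hx
    have hpp : π (x : G) = π g := Φ.injective hx
    have hmem : g * (x : G)⁻¹ ∈ N₂ := by
      rw [← hπ1, map_mul, map_inv, hpp, mul_inv_cancel]
    refine ⟨(⟨g * (x:G)⁻¹, hmem⟩, x), ?_⟩
    rw [hψ]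
    show g * (x:G)⁻¹ * (x:G) = g
    rw [mul_assoc, inv_mul_cancel, mul_one]
  exact ⟨(MulEquiv.ofBijective ψ ⟨hψinj, hψsurj⟩).symm.trans
    (MulEquiv.prodCongr e₂ (MulEquiv.ofBijective χ ⟨hχinj, hχsurj⟩))⟩
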